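/- Let t₁, t₂ ≥ 0, C₁ ∈ Sep(X₁,…,X_m) with t₁·1_X − C₁ ∈ Sep(X₁,…,X_m)*, and C₂ ∈ Sep(Y₁,…,Y_m) with t₂·1_Y − C₂ ∈ Sep(Y₁,…,Y_m)*. Then t₁t₂·1_{X⊗Y} − C₁⊗C₂ ∈ Sep(X₁⊗Y₁,…,X_m⊗Y_m)*. -/

import Mathlib

open scoped Kronecker ComplexOrder

/-- Trace norm of a complex matrix: `Tr √(Aᴴ A)`. -/
noncomputable def traceNorm {n : Type*} [Fintype n] [DecidableEq n] (A : Matrix n n ℂ) : ℝ :=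
  ((Matrix.posSemidef_conjTranspose_mul_self A).1.eigenvectorUnitary.1 *
    Matrix.diagonal (((↑) : ℝ → ℂ) ∘ (√·) ∘ (Matrix.posSemidef_conjTranspose_mul_self A).1.eigenvalues) *
    (star (Matrix.posSemidef_conjTranspose_mul_self A).1.eigenvectorUnitary : Matrix n n ℂ)).trace.re

/-- Spectral (operator) norm of a complex matrix. -/
noncomputable def opNorm {n : Type*} [Fintype n] [DecidableEq n] (A : Matrix n n ℂ) : ℝ :=
  ‖Matrix.toEuclideanCLM (𝕜 := ℂ) A‖

/-- Tensor product of a family of `m` matrices, as a matrix on the product index. -/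
noncomputable def famTensor {m : ℕ} {ι : Fin m → Type*} [∀ j, Fintype (ι j)]
    (M : ∀ j, Matrix (ι j) (ι j) ℂ) : Matrix (∀ j, ι j) (∀ j, ι j) ℂ :=
  fun x y => ∏ j, M j (x j) (y j)

/-- Full separability across the partition `ι 1, …, ι m`. -/
def IsFullySep {m : ℕ} {ι : Fin m → Type*} [∀ j, Fintype (ι j)]
    (A : Matrix (∀ j, ι j) (∀ j, ι j) ℂ) : Prop :=
  ∃ (k : ℕ) (P : Fin k → ∀ j, Matrix (ι j) (ι j) ℂ),
    (∀ i j, (P i j).PosSemidef) ∧ A = ∑ i, famTensor (P i)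

/-- Membership in the dual cone of the fully separable operators. -/
def InSepDual {m : ℕ} {ι : Fin m → Type*} [∀ j, Fintype (ι j)]
    (W : Matrix (∀ j, ι j) (∀ j, ι j) ℂ) : Prop :=
  ∀ S : Matrix (∀ j, ι j) (∀ j, ι j) ℂ, IsFullySep S → 0 ≤ ((S * W).trace).re

/-- Partial trace over the second tensor factor. -/
noncomputable def ptraceY {ι κ : Type*} [Fintype κ] (M : Matrix (ι × κ) (ι × κ) ℂ) :
    Matrix ι ι ℂ :=
  fun i i' => ∑ k, M (i, k) (i', k)

/-- The natural identification `⨂ⱼ (Xⱼ ⊗ Yⱼ) ≃ (⨂ⱼ Xⱼ) ⊗ (⨂ⱼ Yⱼ)` on index sets. -/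
def piProd {m : ℕ} (ι κ : Fin m → Type*) : (∀ j, ι j × κ j) ≃ (∀ j, ι j) × (∀ j, κ j) where
  toFun f := (fun j => (f j).1, fun j => (f j).2)
  invFun p := fun j => (p.1 j, p.2 j)
  left_inv _ := rfl
  right_inv _ := rfl

/-! ### Auxiliary lemmas -/

open scoped Matrix

/-- Contraction of `P` over the second factor against `Q`. -/
noncomputable def contractR {α β : Type*} [Fintype α] [Fintype β]
    (P : Matrix (α × β) (α × β) ℂ) (Q : Matrix β β ℂ) : Matrix α α ℂ :=
  Matrix.of fun x x' => ∑ u, ∑ v, P (x, u) (x', v) * Q v u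

lemma contractR_posSemidef {α β : Type*} [Fintype α] [Fintype β]
    {P : Matrix (α × β) (α × β) ℂ} {Q : Matrix β β ℂ}
    (hP : P.PosSemidef) (hQ : Q.PosSemidef) : (contractR P Q).PosSemidef := by
  obtain ⟨Y, hY⟩ : ∃ Y : Matrix β β ℂ, Q = Yᴴ * Y := by
    classical
    open scoped MatrixOrder in
    obtain ⟨B, hB⟩ := CStarAlgebra.nonneg_iff_eq_star_mul_self.mp hQ.nonneg
    exact ⟨B, hB⟩
  refine Matrix.PosSemidef.of_dotProduct_mulVec_nonneg ?_ ?_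
  · ext x x'
    simp only [Matrix.conjTranspose_apply, contractR, Matrix.of_apply, star_sum, star_mul']
    rw [Finset.sum_comm]
    refine Finset.sum_congr rfl fun u _ => Finset.sum_congr rfl fun v _ => ?_
    rw [hP.1.apply, hQ.1.apply]
  · intro w
    have key : star w ⬝ᵥ (contractR P Q) *ᵥ w
        = ∑ s, star (fun p : α × β => w p.1 * star (Y s p.2)) ⬝ᵥ
            P *ᵥ (fun p : α × β => w p.1 * star (Y s p.2)) := by
      subst hY
      simp only [dotProduct, Matrix.mulVec, contractR, Matrix.of_apply, Matrix.mul_apply,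
        Matrix.conjTranspose_apply, Pi.star_apply, star_star, Finset.mul_sum,
        Finset.sum_mul, Fintype.sum_prod_type]
      conv_rhs => rw [Finset.sum_comm]
      refine Finset.sum_congr rfl fun x _ => ?_
      conv_rhs => rw [Finset.sum_comm]
      conv_lhs => rw [Finset.sum_comm]
      refine Finset.sum_congr rfl fun u _ => ?_
      conv_rhs => rw [Finset.sum_comm]
      refine Finset.sum_congr rfl fun y _ => ?_
      conv_rhs => rw [Finset.sum_comm]
      refine Finset.sum_congr rfl fun v _ => Finset.sum_congr rfl fun s _ => ?_
      simp only [star_mul', star_star]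
      ring
    rw [key]
    exact Finset.sum_nonneg fun s _ => hP.dotProduct_mulVec_nonneg _

section TraceLemmas
variable {m : ℕ} {ι κ : Fin m → Type} [∀ j, Fintype (ι j)] [∀ j, Fintype (κ j)]

lemma sum_piProd (F : (∀ j, ι j × κ j) → ℂ) :
    ∑ f, F f = ∑ x : ∀ j, ι j, ∑ y : ∀ j, κ j, F (fun j => (x j, y j)) := by
  rw [← Equiv.sum_comp (piProd ι κ).symm F, Fintype.sum_prod_type]
  rfl

lemma trace_mul_eq (n : Type*) [Fintype n] (M N : Matrix n n ℂ) :
    (M * N).trace = ∑ a, ∑ b, M a b * N b a := by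
  simp [Matrix.trace, Matrix.mul_apply, Matrix.diag]

lemma trace_kron_right (P : ∀ j, Matrix (ι j × κ j) (ι j × κ j) ℂ)
    (A : Matrix (∀ j, ι j) (∀ j, ι j) ℂ) (Q : ∀ j, Matrix (κ j) (κ j) ℂ) :
    (famTensor P * Matrix.reindex (piProd ι κ).symm (piProd ι κ).symm (A ⊗ₖ famTensor Q)).trace
      = (famTensor (fun j => contractR (P j) (Q j)) * A).trace := by
  rw [trace_mul_eq, trace_mul_eq]
  simp only [sum_piProd, famTensor, contractR, Matrix.reindex_apply, Matrix.submatrix_apply,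
    Equiv.symm_symm, piProd, Equiv.coe_fn_mk, Matrix.kroneckerMap_apply, Matrix.of_apply]
  simp only [Fintype.prod_sum, Finset.sum_mul]
  refine Finset.sum_congr rfl fun x _ => ?_
  conv_lhs => rw [Finset.sum_comm]
  refine Finset.sum_congr rfl fun x' _ => Finset.sum_congr rfl fun y _ =>
    Finset.sum_congr rfl fun y' _ => ?_
  rw [Finset.prod_mul_distrib]
  ring

lemma trace_kron_left (P : ∀ j, Matrix (ι j × κ j) (ι j × κ j) ℂ)
    (Q : ∀ j, Matrix (ι j) (ι j) ℂ) (B : Matrix (∀ j, κ j) (∀ j, κ j) ℂ) :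
    (famTensor P * Matrix.reindex (piProd ι κ).symm (piProd ι κ).symm (famTensor Q ⊗ₖ B)).trace
      = (famTensor (fun j =>
          contractR ((P j).submatrix (fun p : κ j × ι j => (p.2, p.1)) (fun p => (p.2, p.1)))
            (Q j)) * B).trace := by
  rw [trace_mul_eq, trace_mul_eq]
  simp only [sum_piProd, famTensor, contractR, Matrix.reindex_apply, Matrix.submatrix_apply,
    Equiv.symm_symm, piProd, Equiv.coe_fn_mk, Matrix.kroneckerMap_apply, Matrix.of_apply]
  simp only [Fintype.prod_sum, Finset.sum_mul]
  conv_lhs => rw [Finset.sum_comm]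
  refine Finset.sum_congr rfl fun y _ => ?_
  conv_rhs => rw [Finset.sum_comm]
  refine Finset.sum_congr rfl fun x _ => ?_
  conv_lhs => rw [Finset.sum_comm]
  refine Finset.sum_congr rfl fun y' _ => Finset.sum_congr rfl fun x' _ => ?_
  rw [Finset.prod_mul_distrib]
  ring

end TraceLemmas

section DualLemmas
variable {m : ℕ} {ι κ : Fin m → Type} [∀ j, Fintype (ι j)] [∀ j, Fintype (κ j)]

lemma isFullySep_famTensor (P : ∀ j, Matrix (ι j) (ι j) ℂ) (hP : ∀ j, (P j).PosSemidef) :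
    IsFullySep (famTensor P) :=
  ⟨1, fun _ => P, fun _ j => hP j, by simp⟩

lemma famTensor_one [∀ j, DecidableEq (ι j)] :
    famTensor (fun j => (1 : Matrix (ι j) (ι j) ℂ)) = 1 := by
  ext x y
  by_cases h : x = y
  · subst h
    simp [famTensor, Matrix.one_apply]
  · obtain ⟨j, hj⟩ : ∃ j, x j ≠ y j := by
      by_contra hc
      push_neg at hc
      exact h (funext hc)
    rw [Matrix.one_apply_ne h]
    exact Finset.prod_eq_zero (Finset.mem_univ j) (Matrix.one_apply_ne hj)

lemma InSepDual.add {W₁ W₂ : Matrix (∀ j, ι j) (∀ j, ι j) ℂ}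
    (h₁ : InSepDual W₁) (h₂ : InSepDual W₂) : InSepDual (W₁ + W₂) := by
  intro S hS
  rw [Matrix.mul_add, Matrix.trace_add, Complex.add_re]
  exact add_nonneg (h₁ S hS) (h₂ S hS)

lemma InSepDual.smul {W : Matrix (∀ j, ι j) (∀ j, ι j) ℂ} (r : ℝ) (hr : 0 ≤ r)
    (h : InSepDual W) : InSepDual ((r : ℂ) • W) := by
  intro S hS
  rw [Matrix.mul_smul, Matrix.trace_smul, smul_eq_mul, Complex.re_ofReal_mul]
  exact mul_nonneg hr (h S hS)

lemma InSepDual.sum {γ : Type*} {s : Finset γ} {f : γ → Matrix (∀ j, ι j) (∀ j, ι j) ℂ}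
    (h : ∀ i ∈ s, InSepDual (f i)) : InSepDual (∑ i ∈ s, f i) := by
  intro S hS
  rw [Matrix.mul_sum, Matrix.trace_sum, Complex.re_sum]
  exact Finset.sum_nonneg fun i hi => h i hi S hS

end DualLemmas

section DualKron
variable {m : ℕ} {ι κ : Fin m → Type} [∀ j, Fintype (ι j)] [∀ j, Fintype (κ j)]

lemma dual_kron_right {A : Matrix (∀ j, ι j) (∀ j, ι j) ℂ} (hA : InSepDual A)
    {Q : ∀ j, Matrix (κ j) (κ j) ℂ} (hQ : ∀ j, (Q j).PosSemidef) :
    InSepDual (ι := fun j => ι j × κ j)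
      (Matrix.reindex (piProd ι κ).symm (piProd ι κ).symm (A ⊗ₖ famTensor Q)) := by
  rintro S ⟨k, P, hP, rfl⟩
  rw [Finset.sum_mul, Matrix.trace_sum, Complex.re_sum]
  refine Finset.sum_nonneg fun i _ => ?_
  rw [trace_kron_right]
  exact hA _ (isFullySep_famTensor _ fun j => contractR_posSemidef (hP i j) (hQ j))

lemma dual_kron_left {B : Matrix (∀ j, κ j) (∀ j, κ j) ℂ} (hB : InSepDual B)
    {Q : ∀ j, Matrix (ι j) (ι j) ℂ} (hQ : ∀ j, (Q j).PosSemidef) :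
    InSepDual (ι := fun j => ι j × κ j)
      (Matrix.reindex (piProd ι κ).symm (piProd ι κ).symm (famTensor Q ⊗ₖ B)) := by
  rintro S ⟨k, P, hP, rfl⟩
  rw [Finset.sum_mul, Matrix.trace_sum, Complex.re_sum]
  refine Finset.sum_nonneg fun i _ => ?_
  rw [trace_kron_left]
  exact hB _ (isFullySep_famTensor _ fun j =>
    contractR_posSemidef ((hP i j).submatrix _) (hQ j))

lemma reindex_sum {l n l' n' γ : Type*} (e₁ : l ≃ l') (e₂ : n ≃ n') (s : Finset γ)
    (f : γ → Matrix l n ℂ) :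
    Matrix.reindex e₁ e₂ (∑ i ∈ s, f i) = ∑ i ∈ s, Matrix.reindex e₁ e₂ (f i) := by
  ext a b
  simp [Matrix.reindex_apply, Matrix.sum_apply]

lemma kronecker_sum_right {l n l' n' γ : Type*} (A : Matrix l n ℂ) (s : Finset γ)
    (f : γ → Matrix l' n' ℂ) :
    A ⊗ₖ (∑ i ∈ s, f i) = ∑ i ∈ s, A ⊗ₖ f i := by
  ext ⟨a, b⟩ ⟨c, d⟩
  simp [Matrix.kroneckerMap_apply, Finset.mul_sum, Matrix.sum_apply]

lemma kronecker_sum_left {l n l' n' γ : Type*} (B : Matrix l' n' ℂ) (s : Finset γ)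
    (f : γ → Matrix l n ℂ) :
    (∑ i ∈ s, f i) ⊗ₖ B = ∑ i ∈ s, f i ⊗ₖ B := by
  ext ⟨a, b⟩ ⟨c, d⟩
  simp [Matrix.kroneckerMap_apply, Finset.sum_mul, Matrix.sum_apply]

end DualKron

/-- If `t₁, t₂ ≥ 0`, `C₁ ∈ Sep(X₁,…,X_m)` with `t₁·1 − C₁` in the dual
separable cone, and `C₂ ∈ Sep(Y₁,…,Y_m)` with `t₂·1 − C₂` in the dual separable cone, then
`t₁t₂·1 − C₁⊗C₂ ∈ Sep(X₁⊗Y₁,…,X_m⊗Y_m)*`. -/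
theorem dual_tensor_bound {m : ℕ} {ι κ : Fin m → Type}
    [∀ j, Fintype (ι j)] [∀ j, Fintype (κ j)]
    [∀ j, DecidableEq (ι j)] [∀ j, DecidableEq (κ j)]
    (t₁ t₂ : ℝ) (ht₁ : 0 ≤ t₁) (ht₂ : 0 ≤ t₂)
    (C₁ : Matrix (∀ j, ι j) (∀ j, ι j) ℂ) (C₂ : Matrix (∀ j, κ j) (∀ j, κ j) ℂ)
    (hC₁ : IsFullySep C₁) (hC₂ : IsFullySep C₂)
    (hD₁ : InSepDual ((t₁ : ℂ) • (1 : Matrix (∀ j, ι j) (∀ j, ι j) ℂ) - C₁))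
    (hD₂ : InSepDual ((t₂ : ℂ) • (1 : Matrix (∀ j, κ j) (∀ j, κ j) ℂ) - C₂)) :
    InSepDual (ι := fun j => ι j × κ j)
      (((t₁ * t₂ : ℝ) : ℂ) • (1 : Matrix (∀ j, ι j × κ j) (∀ j, ι j × κ j) ℂ) -
        Matrix.reindex (piProd ι κ).symm (piProd ι κ).symm (C₁ ⊗ₖ C₂)) := by
  obtain ⟨k₁, P₁, hP₁, hC₁eq⟩ := hC₁
  obtain ⟨k₂, P₂, hP₂, hC₂eq⟩ := hC₂
  have hone : (1 : Matrix (∀ j, ι j × κ j) (∀ j, ι j × κ j) ℂ)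
      = Matrix.reindex (piProd ι κ).symm (piProd ι κ).symm
          ((1 : Matrix (∀ j, ι j) (∀ j, ι j) ℂ) ⊗ₖ (1 : Matrix (∀ j, κ j) (∀ j, κ j) ℂ)) := by
    rw [Matrix.one_kronecker_one, Matrix.reindex_apply, Equiv.symm_symm,
      Matrix.submatrix_one_equiv]
  have hrw : (((t₁ * t₂ : ℝ) : ℂ) • (1 : Matrix (∀ j, ι j × κ j) (∀ j, ι j × κ j) ℂ) -
        Matrix.reindex (piProd ι κ).symm (piProd ι κ).symm (C₁ ⊗ₖ C₂))
      = ((1/2 : ℝ) : ℂ) • (Matrix.reindex (piProd ι κ).symm (piProd ι κ).symm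
            (((t₁ : ℂ) • 1 - C₁) ⊗ₖ ((t₂ : ℂ) • 1 + C₂))
          + Matrix.reindex (piProd ι κ).symm (piProd ι κ).symm
            (((t₁ : ℂ) • 1 + C₁) ⊗ₖ ((t₂ : ℂ) • 1 - C₂))) := by
    rw [hone]
    have expand : (((t₁ : ℂ) • 1 - C₁) ⊗ₖ ((t₂ : ℂ) • 1 + C₂))
        = ((t₁:ℂ)*(t₂:ℂ)) • (1 ⊗ₖ 1) + (t₁:ℂ) • (1 ⊗ₖ C₂) - (t₂:ℂ) • (C₁ ⊗ₖ 1)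
          - C₁ ⊗ₖ C₂ := by
      rw [sub_eq_add_neg ((t₁:ℂ) • 1) C₁, ← neg_one_smul ℂ C₁]
      simp only [Matrix.add_kronecker, Matrix.kronecker_add, Matrix.smul_kronecker,
        Matrix.kronecker_smul, smul_smul]
      module
    have expand2 : (((t₁ : ℂ) • 1 + C₁) ⊗ₖ ((t₂ : ℂ) • 1 - C₂))
        = ((t₁:ℂ)*(t₂:ℂ)) • (1 ⊗ₖ 1) - (t₁:ℂ) • (1 ⊗ₖ C₂) + (t₂:ℂ) • (C₁ ⊗ₖ 1)
          - C₁ ⊗ₖ C₂ := by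
      rw [sub_eq_add_neg ((t₂:ℂ) • 1) C₂, ← neg_one_smul ℂ C₂]
      simp only [Matrix.add_kronecker, Matrix.kronecker_add, Matrix.smul_kronecker,
        Matrix.kronecker_smul, smul_smul]
      module
    rw [expand, expand2]
    simp only [Matrix.reindex_apply, Matrix.submatrix_add, Matrix.submatrix_sub,
      Matrix.submatrix_smul, Complex.ofReal_mul, Pi.add_apply, Pi.sub_apply, Pi.smul_apply]
    push_cast
    module
  rw [hrw]
  refine InSepDual.smul _ (by norm_num) (InSepDual.add ?_ ?_)
  · have hsplit : Matrix.reindex (piProd ι κ).symm (piProd ι κ).symm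
          (((t₁ : ℂ) • 1 - C₁) ⊗ₖ ((t₂ : ℂ) • 1 + C₂))
        = (t₂ : ℂ) • Matrix.reindex (piProd ι κ).symm (piProd ι κ).symm
            (((t₁ : ℂ) • 1 - C₁) ⊗ₖ famTensor (fun j => (1 : Matrix (κ j) (κ j) ℂ)))
          + ∑ i, Matrix.reindex (piProd ι κ).symm (piProd ι κ).symm
            (((t₁ : ℂ) • 1 - C₁) ⊗ₖ famTensor (P₂ i)) := by
      rw [famTensor_one, Matrix.kronecker_add, Matrix.kronecker_smul, hC₂eq,
        kronecker_sum_right, ← reindex_sum]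
      simp only [Matrix.reindex_apply, Matrix.submatrix_add, Matrix.submatrix_smul,
        Pi.add_apply, Pi.smul_apply]
    rw [hsplit]
    exact InSepDual.add
      (InSepDual.smul t₂ ht₂ (dual_kron_right hD₁ fun j => Matrix.PosSemidef.one))
      (InSepDual.sum fun i _ => dual_kron_right hD₁ fun j => hP₂ i j)
  · have hsplit : Matrix.reindex (piProd ι κ).symm (piProd ι κ).symm
          (((t₁ : ℂ) • 1 + C₁) ⊗ₖ ((t₂ : ℂ) • 1 - C₂))
        = (t₁ : ℂ) • Matrix.reindex (piProd ι κ).symm (piProd ι κ).symm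
            (famTensor (fun j => (1 : Matrix (ι j) (ι j) ℂ)) ⊗ₖ ((t₂ : ℂ) • 1 - C₂))
          + ∑ i, Matrix.reindex (piProd ι κ).symm (piProd ι κ).symm
            (famTensor (P₁ i) ⊗ₖ ((t₂ : ℂ) • 1 - C₂)) := by
      rw [famTensor_one, Matrix.add_kronecker, Matrix.smul_kronecker, hC₁eq,
        kronecker_sum_left, ← reindex_sum]
      simp only [Matrix.reindex_apply, Matrix.submatrix_add, Matrix.submatrix_smul,
        Pi.add_apply, Pi.smul_apply]
    rw [hsplit]
    exact InSepDual.add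
      (InSepDual.smul t₁ ht₁ (dual_kron_left hD₂ fun j => Matrix.PosSemidef.one))
      (InSepDual.sum fun i _ => dual_kron_left hD₂ fun j => hP₁ i j)
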